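/- Fix an integer q ≥ 1. For every prime p and every n ≥ 1, the p-adic valuation of the product ∏ gcd(j_1, j_2, …, j_q), taken over all q-tuples (j_1, …, j_q) with 1 ≤ j_i ≤ n for each i, equals ∑_{i=1}^{n} ⌊n/p^i⌋^q. -/

import Mathlib

open Finset

lemma count_dvd_aux (d n : ℕ) :
    ((Icc 1 n).filter (d ∣ ·)).card = n / d := by
  rw [show Icc 1 n = Ioc 0 n from by rw [← Finset.Icc_add_one_left_eq_Ioc]; rfl]
  exact Nat.Ioc_filter_dvd_card_eq_div n d

lemma val_as_sum (p : ℕ) (hp : p.Prime) (m n : ℕ) (hm : m ≠ 0) (hmn : m ≤ n) :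
    m.factorization p = ∑ i ∈ Icc 1 n, if p ^ i ∣ m then 1 else 0 := by
  set d := m.factorization p with hd
  have hdvd : p ^ d ∣ m := Nat.ordProj_dvd m p
  have hle : p ^ d ≤ m := Nat.le_of_dvd (Nat.pos_of_ne_zero hm) hdvd
  have hdlt : d < p ^ d := Nat.lt_pow_self (n := d) hp.one_lt
  have hdn : d ≤ n := by omega
  have key : ∀ i, p ^ i ∣ m ↔ i ≤ d :=
    fun i => Nat.Prime.pow_dvd_iff_le_factorization hp hm
  calc d = (Icc 1 d).card := (Nat.card_Icc 1 d).symm ▸ by omega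
    _ = ((Icc 1 n).filter (fun i => i ≤ d)).card := by
        congr 1; ext i; simp only [mem_Icc, mem_filter]; omega
    _ = ∑ i ∈ Icc 1 n, if i ≤ d then 1 else 0 := by
        rw [Finset.card_filter]
    _ = ∑ i ∈ Icc 1 n, if p ^ i ∣ m then 1 else 0 := by
        refine Finset.sum_congr rfl fun i _ => ?_
        simp [key i]

theorem stmt_9 (q : ℕ) (hq : 1 ≤ q) (p : ℕ) (hp : p.Prime) (n : ℕ) (hn : 1 ≤ n) :
    (∏ j ∈ Fintype.piFinset (fun _ : Fin q => Finset.Icc 1 n),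
        Finset.gcd Finset.univ j).factorization p =
      ∑ i ∈ Finset.Icc 1 n, (n / p ^ i) ^ q := by
  have k0 : Fin q := ⟨0, by omega⟩
  have hne : ∀ j ∈ Fintype.piFinset (fun _ : Fin q => Icc 1 n),
      Finset.gcd univ j ≠ 0 := by
    intro j hj h0
    rw [Finset.gcd_eq_zero_iff] at h0
    have hk := (Fintype.mem_piFinset.mp hj) k0
    rw [mem_Icc] at hk
    have := h0 k0 (mem_univ k0)
    omega
  have hle : ∀ j ∈ Fintype.piFinset (fun _ : Fin q => Icc 1 n),
      Finset.gcd univ j ≤ n := by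
    intro j hj
    have hk := (Fintype.mem_piFinset.mp hj) k0
    rw [mem_Icc] at hk
    exact le_trans (Nat.le_of_dvd (by omega) (Finset.gcd_dvd (mem_univ k0))) hk.2
  rw [Nat.factorization_prod hne, Finset.sum_apply']
  rw [Finset.sum_congr rfl (fun j hj => val_as_sum p hp _ n (hne j hj) (hle j hj))]
  rw [Finset.sum_comm]
  refine Finset.sum_congr rfl fun i _ => ?_
  have hdvd : ∀ j : Fin q → ℕ, (p ^ i ∣ Finset.gcd univ j) ↔ ∀ k, p ^ i ∣ j k := by
    intro j
    rw [Finset.dvd_gcd_iff]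
    simp
  calc (∑ j ∈ Fintype.piFinset (fun _ : Fin q => Icc 1 n),
        if p ^ i ∣ Finset.gcd univ j then 1 else 0)
      = ((Fintype.piFinset (fun _ : Fin q => Icc 1 n)).filter
          (fun j => ∀ k, p ^ i ∣ j k)).card := by
        rw [Finset.card_filter]
        exact Finset.sum_congr rfl fun j _ => by simp [hdvd j]
    _ = (Fintype.piFinset (fun _ : Fin q => (Icc 1 n).filter (p ^ i ∣ ·))).card := by
        congr 1
        ext j
        simp only [mem_filter, Fintype.mem_piFinset, mem_Icc]
        exact ⟨fun ⟨h1, h2⟩ a => ⟨h1 a, h2 a⟩, fun h => ⟨fun a => (h a).1, fun a => (h a).2⟩⟩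
    _ = (n / p ^ i) ^ q := by
        rw [Fintype.card_piFinset]
        simp [count_dvd_aux]
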